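/- Under the posterior π(κ | x, τ) ∝ κ^{a-1/2}(1-κ)^{-a-1} L((1/τ²)(1/κ-1)) e^{-κx²/2}, for each fixed τ > 0, E(1-κ | x, τ) → 1 as x → ∞. -/

import Mathlib

open MeasureTheory Filter Set Topology

lemma g0_integrable (a K : ℝ) (ha : 0 < a) (hK : 0 < K)
    (L : ℝ → ℝ) (hLmeas : Measurable L) (hLpos : ∀ t > 0, 0 < L t)
    (hnorm : K * ∫ t in Ioi (0:ℝ), t ^ (-a - 1) * L t = 1)
    (τ : ℝ) (hτ : 0 < τ) :
    IntegrableOn (fun κ =>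
      κ ^ (a - 1/2) * (1 - κ) ^ (-a - 1) * L ((1 / τ ^ 2) * (1 / κ - 1)))
      (Ioo (0:ℝ) 1) := by
  have hτ2 : (0:ℝ) < τ ^ 2 := by positivity
  -- the reference integrand is integrable
  have hL1 : IntegrableOn (fun t => t ^ (-a - 1) * L t) (Ioi (0:ℝ)) := by
    by_contra h
    rw [integral_undef h, mul_zero] at hnorm
    exact one_ne_zero hnorm.symm
  set g0 : ℝ → ℝ := fun κ =>
    κ ^ (a - 1/2) * (1 - κ) ^ (-a - 1) * L ((1 / τ ^ 2) * (1 / κ - 1)) with hg0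
  set φ : ℝ → ℝ := fun t => (1 + τ ^ 2 * t)⁻¹ with hφ
  set φ' : ℝ → ℝ := fun t => -(τ ^ 2) / (1 + τ ^ 2 * t) ^ 2 with hφ'
  have hu0 : ∀ t : ℝ, t ∈ Ioi (0:ℝ) → 0 < 1 + τ ^ 2 * t := by
    intro t ht
    have : 0 < τ ^ 2 * t := mul_pos hτ2 ht
    linarith
  have hderiv : ∀ t ∈ Ioi (0:ℝ), HasDerivWithinAt φ (φ' t) (Ioi 0) t := by
    intro t ht
    have h1 : HasDerivAt (fun s : ℝ => 1 + τ ^ 2 * s) (τ ^ 2) t := by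
      simpa using ((hasDerivAt_id t).const_mul (τ ^ 2)).const_add 1
    exact (h1.inv (hu0 t ht).ne').hasDerivWithinAt
  have hinj : InjOn φ (Ioi 0) := by
    intro s hs t ht h
    have h2 : (1 + τ ^ 2 * s) = (1 + τ ^ 2 * t) := by
      have := inv_inj.1 h
      exact this
    have h3 : τ ^ 2 * s = τ ^ 2 * t := by linarith
    exact mul_left_cancel₀ hτ2.ne' h3
  have himg : φ '' Ioi 0 = Ioo (0:ℝ) 1 := by
    ext κ
    constructor
    · rintro ⟨t, ht, rfl⟩
      have hu := hu0 t ht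
      constructor
      · exact inv_pos.2 hu
      · rw [inv_lt_one_iff₀]
        right
        have : 0 < τ ^ 2 * t := mul_pos hτ2 ht
        linarith
    · rintro ⟨h1, h2⟩
      refine ⟨(1 / κ - 1) / τ ^ 2, ?_, ?_⟩
      · have : 1 < 1 / κ := by
          rw [lt_div_iff₀ h1]; linarith
        have : 0 < 1 / κ - 1 := by linarith
        exact div_pos this hτ2
      · show (1 + τ ^ 2 * ((1 / κ - 1) / τ ^ 2))⁻¹ = κ
        have hs : 1 + τ ^ 2 * ((1 / κ - 1) / τ ^ 2) = 1 / κ := by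
          field_simp
          ring
        rw [hs, one_div, inv_inv]
  rw [show Ioo (0:ℝ) 1 = φ '' Ioi 0 from himg.symm,
    integrableOn_image_iff_integrableOn_abs_deriv_smul measurableSet_Ioi hderiv hinj]
  -- bound the transformed integrand
  apply Integrable.mono' (g := fun t => (τ ^ 2) ^ (-a) * (t ^ (-a - 1) * L t))
    (hL1.const_mul _)
  · apply Measurable.aestronglyMeasurable
    have hφm : Measurable φ := (measurable_const.add (measurable_id.const_mul _)).inv
    have hφ'm : Measurable φ' := measurable_const.div ((measurable_const.add
      (measurable_id.const_mul _)).pow measurable_const)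
    have hrp : ∀ y : ℝ, Measurable fun x : ℝ => x ^ y := by
      intro y; measurability
    have hg0m : Measurable g0 := by
      apply Measurable.mul
      · exact (hrp (a - 1/2)).mul ((hrp (-a - 1)).comp
          (measurable_const.sub measurable_id))
      · exact hLmeas.comp (measurable_const.mul
          ((measurable_one.div measurable_id).sub measurable_const))
    have : Measurable fun t => |φ' t| * g0 (φ t) := hφ'm.abs.mul (hg0m.comp hφm)
    simpa [smul_eq_mul] using this
  · filter_upwards [ae_restrict_mem measurableSet_Ioi] with t ht
    have ht0 : (0:ℝ) < t := ht
    have hu : 0 < 1 + τ ^ 2 * t := hu0 t ht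
    have hu1 : 1 ≤ 1 + τ ^ 2 * t := by nlinarith
    set u : ℝ := 1 + τ ^ 2 * t with hudef
    -- compute the argument of L
    have harg : (1 / τ ^ 2) * (1 / φ t - 1) = t := by
      show (1 / τ ^ 2) * (1 / u⁻¹ - 1) = t
      rw [one_div u⁻¹, inv_inv, hudef]
      field_simp
      ring
    have h1κ : 1 - φ t = τ ^ 2 * t / u := by
      show 1 - u⁻¹ = τ ^ 2 * t / u
      field_simp [hudef]
      linarith
    have hLt : 0 ≤ L t := (hLpos t ht0).le
    -- key equality
    have key : |φ' t| * g0 (φ t) =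
        (τ ^ 2) ^ (-a) * u ^ (-(1/2) : ℝ) * (t ^ (-a - 1) * L t) := by
      have habs : |φ' t| = τ ^ 2 * ((u : ℝ) ^ (2:ℕ))⁻¹ := by
        show |(-(τ ^ 2) / u ^ 2)| = τ ^ 2 * (u ^ (2:ℕ))⁻¹
        rw [abs_div, abs_neg, abs_of_pos hτ2, abs_of_pos (by positivity : (0:ℝ) < u ^ 2),
          div_eq_mul_inv]
      have hg0t : g0 (φ t) = (u⁻¹) ^ (a - 1/2) * (τ ^ 2 * t / u) ^ (-a - 1) * L t := by
        rw [hg0]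
        show (φ t) ^ (a - 1/2) * (1 - φ t) ^ (-a - 1) * L ((1 / τ ^ 2) * (1 / φ t - 1))
          = (u⁻¹) ^ (a - 1/2) * (τ ^ 2 * t / u) ^ (-a - 1) * L t
        rw [harg, h1κ]
      rw [habs, hg0t]
      rw [Real.inv_rpow hu.le, Real.div_rpow (by positivity) hu.le,
        Real.mul_rpow hτ2.le ht0.le]
      have hu2 : ((u : ℝ) ^ (2:ℕ))⁻¹ * ((u ^ (a - 1/2))⁻¹ * (u ^ (-a - 1))⁻¹) =
          u ^ (-(1/2) : ℝ) := by
        rw [← Real.rpow_natCast u 2, ← Real.rpow_neg hu.le, ← Real.rpow_neg hu.le,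
          ← Real.rpow_neg hu.le, ← Real.rpow_add hu, ← Real.rpow_add hu]
        norm_num
      have hA2 : τ ^ 2 * ((τ ^ 2 : ℝ) ^ (-a - 1)) = (τ ^ 2) ^ (-a) := by
        calc τ ^ 2 * ((τ ^ 2 : ℝ) ^ (-a - 1))
            = (τ ^ 2 : ℝ) ^ (1:ℝ) * (τ ^ 2 : ℝ) ^ (-a - 1) := by rw [Real.rpow_one]
          _ = (τ ^ 2 : ℝ) ^ ((1:ℝ) + (-a - 1)) := (Real.rpow_add hτ2 _ _).symm
          _ = (τ ^ 2 : ℝ) ^ (-a) := by norm_num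
      calc τ ^ 2 * ((u : ℝ) ^ (2:ℕ))⁻¹ *
            ((u ^ (a - 1/2))⁻¹ * ((τ ^ 2) ^ (-a - 1) * t ^ (-a - 1) / u ^ (-a - 1)) * L t)
          = (τ ^ 2 * ((τ ^ 2 : ℝ) ^ (-a - 1))) *
              (((u : ℝ) ^ (2:ℕ))⁻¹ * ((u ^ (a - 1/2))⁻¹ * (u ^ (-a - 1))⁻¹)) *
              (t ^ (-a - 1) * L t) := by
            rw [div_eq_mul_inv]; ring
        _ = (τ ^ 2) ^ (-a) * u ^ (-(1/2) : ℝ) * (t ^ (-a - 1) * L t) := by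
            rw [hu2, hA2]
    rw [Real.norm_eq_abs, smul_eq_mul]
    have hnn : 0 ≤ |φ' t| * g0 (φ t) := by
      rw [key]
      have : (0:ℝ) ≤ u ^ (-(1/2) : ℝ) := (Real.rpow_pos_of_pos hu _).le
      positivity
    rw [abs_of_nonneg hnn, key]
    have hle1 : u ^ (-(1/2) : ℝ) ≤ 1 :=
      Real.rpow_le_one_of_one_le_of_nonpos hu1 (by norm_num)
    calc (τ ^ 2) ^ (-a) * u ^ (-(1/2) : ℝ) * (t ^ (-a - 1) * L t)
        ≤ (τ ^ 2) ^ (-a) * 1 * (t ^ (-a - 1) * L t) := by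
          apply mul_le_mul_of_nonneg_right _ (by positivity)
          exact mul_le_mul_of_nonneg_left hle1 (Real.rpow_pos_of_pos hτ2 _).le
      _ = (τ ^ 2) ^ (-a) * (t ^ (-a - 1) * L t) := by ring


lemma ratio_aux (g : ℝ → ℝ) (hmeas : Measurable g)
    (hpos : ∀ κ ∈ Ioo (0:ℝ) 1, 0 < g κ)
    (hint : IntegrableOn g (Ioo 0 1)) :
    Tendsto (fun x : ℝ =>
      (∫ κ in Ioo (0:ℝ) 1, (1 - κ) * (g κ * Real.exp (-(κ * x ^ 2) / 2))) /
        (∫ κ in Ioo (0:ℝ) 1, g κ * Real.exp (-(κ * x ^ 2) / 2)))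
      atTop (𝓝 1) := by
  -- nonnegativity of g a.e. on subsets of Ioo 0 1
  have hgnn : ∀ {s : Set ℝ}, MeasurableSet s → s ⊆ Ioo (0:ℝ) 1 →
      0 ≤ᵐ[volume.restrict s] g := by
    intro s hs hsub
    filter_upwards [ae_restrict_mem hs] with κ hκ
    exact (hpos κ (hsub hκ)).le
  -- integrability of φ κ * (g κ * exp)
  have hintmul : ∀ (φ : ℝ → ℝ), Measurable φ → (∀ κ ∈ Ioo (0:ℝ) 1, |φ κ| ≤ 1) →
      ∀ x : ℝ, IntegrableOn (fun κ => φ κ * (g κ * Real.exp (-(κ * x ^ 2) / 2)))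
        (Ioo 0 1) := by
    intro φ hφ hφb x
    apply Integrable.mono' hint.abs
    · exact ((hφ.mul (hmeas.mul (by measurability))).aestronglyMeasurable)
    · filter_upwards [ae_restrict_mem measurableSet_Ioo] with κ hκ
      have he : Real.exp (-(κ * x ^ 2) / 2) ≤ 1 := by
        rw [Real.exp_le_one_iff]
        have : 0 ≤ κ * x ^ 2 := mul_nonneg hκ.1.le (sq_nonneg x)
        linarith
      have he0 : 0 < Real.exp (-(κ * x ^ 2) / 2) := Real.exp_pos _
      rw [Real.norm_eq_abs, abs_mul, abs_mul, abs_of_pos he0]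
      calc |φ κ| * (|g κ| * Real.exp (-(κ * x ^ 2) / 2))
          ≤ 1 * (|g κ| * 1) := by
            apply mul_le_mul (hφb κ hκ) _ (by positivity) zero_le_one
            exact mul_le_mul_of_nonneg_left he (abs_nonneg _)
        _ = |g κ| := by ring
  have hint1 : ∀ x : ℝ, IntegrableOn (fun κ => g κ * Real.exp (-(κ * x ^ 2) / 2))
      (Ioo 0 1) := by
    intro x
    have := hintmul (fun _ => 1) measurable_const (by intro κ _; simp) x
    simpa using this
  have hintid : ∀ x : ℝ, IntegrableOn (fun κ => κ * (g κ * Real.exp (-(κ * x ^ 2) / 2)))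
      (Ioo 0 1) :=
    fun x => hintmul id measurable_id (fun κ hκ => by
      rw [id, abs_of_pos hκ.1]; exact hκ.2.le) x
  have hge_nn : ∀ x : ℝ, ∀ {s : Set ℝ}, MeasurableSet s → s ⊆ Ioo (0:ℝ) 1 →
      0 ≤ᵐ[volume.restrict s] fun κ => g κ * Real.exp (-(κ * x ^ 2) / 2) := by
    intro x s hs hsub
    filter_upwards [ae_restrict_mem hs] with κ hκ
    exact mul_nonneg (hpos κ (hsub hκ)).le (Real.exp_pos _).le
  -- positivity of ∫ g on Ioo 0 δ
  have hcpos : ∀ δ : ℝ, 0 < δ → δ ≤ 1 → 0 < ∫ κ in Ioo (0:ℝ) δ, g κ := by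
    intro δ h0 h1
    have hsub : Ioo (0:ℝ) δ ⊆ Ioo 0 1 := Ioo_subset_Ioo_right h1
    have hi : IntegrableOn g (Ioo 0 δ) := hint.mono_set hsub
    rw [setIntegral_pos_iff_support_of_nonneg_ae (hgnn measurableSet_Ioo hsub) hi]
    have hss : Ioo (0:ℝ) δ ⊆ Function.support g ∩ Ioo 0 δ := fun κ hκ =>
      ⟨(hpos κ (hsub hκ)).ne', hκ⟩
    calc (0:ENNReal) < volume (Ioo (0:ℝ) δ) := by simp [h0]
      _ ≤ volume (Function.support g ∩ Ioo 0 δ) := measure_mono hss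
  -- lower bound on the denominator D
  have hDge : ∀ δ : ℝ, 0 < δ → δ ≤ 1 → ∀ x : ℝ,
      Real.exp (-(δ * x ^ 2) / 2) * (∫ κ in Ioo (0:ℝ) δ, g κ) ≤
        ∫ κ in Ioo (0:ℝ) 1, g κ * Real.exp (-(κ * x ^ 2) / 2) := by
    intro δ h0 h1 x
    have hsub : Ioo (0:ℝ) δ ⊆ Ioo 0 1 := Ioo_subset_Ioo_right h1
    have step1 : ∫ κ in Ioo (0:ℝ) δ, Real.exp (-(δ * x ^ 2) / 2) * g κ ≤
        ∫ κ in Ioo (0:ℝ) δ, g κ * Real.exp (-(κ * x ^ 2) / 2) := by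
      apply setIntegral_mono_on ((hint.mono_set hsub).const_mul _)
        ((hint1 x).mono_set hsub) measurableSet_Ioo
      intro κ hκ
      rw [mul_comm]
      apply mul_le_mul_of_nonneg_left _ (hpos κ (hsub hκ)).le
      apply Real.exp_le_exp.2
      have : κ * x ^ 2 ≤ δ * x ^ 2 := mul_le_mul_of_nonneg_right hκ.2.le (sq_nonneg x)
      linarith
    have step2 : ∫ κ in Ioo (0:ℝ) δ, g κ * Real.exp (-(κ * x ^ 2) / 2) ≤
        ∫ κ in Ioo (0:ℝ) 1, g κ * Real.exp (-(κ * x ^ 2) / 2) :=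
      setIntegral_mono_set (hint1 x) (hge_nn x measurableSet_Ioo (fun _ h => h))
        (HasSubset.Subset.eventuallyLE hsub)
    calc Real.exp (-(δ * x ^ 2) / 2) * (∫ κ in Ioo (0:ℝ) δ, g κ)
        = ∫ κ in Ioo (0:ℝ) δ, Real.exp (-(δ * x ^ 2) / 2) * g κ := by
          rw [integral_const_mul]
      _ ≤ _ := le_trans step1 step2
  -- D is positive
  have hDpos : ∀ x : ℝ, 0 < ∫ κ in Ioo (0:ℝ) 1, g κ * Real.exp (-(κ * x ^ 2) / 2) :=
    fun x => lt_of_lt_of_le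
      (mul_pos (Real.exp_pos _) (hcpos 1 one_pos le_rfl)) (hDge 1 one_pos le_rfl x)
  -- upper bound on M
  have hC0 : 0 ≤ ∫ κ in Ioo (0:ℝ) 1, g κ := (hcpos 1 one_pos le_rfl).le
  have hMle : ∀ δ : ℝ, 0 < δ → δ < 1 → ∀ x : ℝ,
      (∫ κ in Ioo (0:ℝ) 1, κ * (g κ * Real.exp (-(κ * x ^ 2) / 2))) ≤
        δ * (∫ κ in Ioo (0:ℝ) 1, g κ * Real.exp (-(κ * x ^ 2) / 2)) +
          Real.exp (-(δ * x ^ 2) / 2) * (∫ κ in Ioo (0:ℝ) 1, g κ) := by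
    intro δ h0 h1 x
    have hsplit : Ioc (0:ℝ) δ ∪ Ioo δ 1 = Ioo 0 1 := Ioc_union_Ioo_eq_Ioo h0.le h1
    have hsub1 : Ioc (0:ℝ) δ ⊆ Ioo 0 1 := hsplit ▸ subset_union_left
    have hsub2 : Ioo δ (1:ℝ) ⊆ Ioo 0 1 := hsplit ▸ subset_union_right
    have hdisj : Disjoint (Ioc (0:ℝ) δ) (Ioo δ 1) := by
      rw [Set.disjoint_left]
      rintro κ ⟨_, h2⟩ ⟨h3, _⟩
      exact absurd h3 (not_lt.2 h2)
    have hA : (∫ κ in Ioc (0:ℝ) δ, κ * (g κ * Real.exp (-(κ * x ^ 2) / 2))) ≤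
        δ * ∫ κ in Ioo (0:ℝ) 1, g κ * Real.exp (-(κ * x ^ 2) / 2) := by
      calc (∫ κ in Ioc (0:ℝ) δ, κ * (g κ * Real.exp (-(κ * x ^ 2) / 2)))
          ≤ ∫ κ in Ioc (0:ℝ) δ, δ * (g κ * Real.exp (-(κ * x ^ 2) / 2)) := by
            apply setIntegral_mono_on ((hintid x).mono_set hsub1)
              (((hint1 x).mono_set hsub1).const_mul δ) measurableSet_Ioc
            intro κ hκ
            apply mul_le_mul_of_nonneg_right hκ.2
            exact mul_nonneg (hpos κ (hsub1 hκ)).le (Real.exp_pos _).le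
        _ = δ * ∫ κ in Ioc (0:ℝ) δ, g κ * Real.exp (-(κ * x ^ 2) / 2) :=
            integral_const_mul δ _
        _ ≤ δ * ∫ κ in Ioo (0:ℝ) 1, g κ * Real.exp (-(κ * x ^ 2) / 2) := by
            apply mul_le_mul_of_nonneg_left _ h0.le
            exact setIntegral_mono_set (hint1 x)
              (hge_nn x measurableSet_Ioo (fun _ h => h))
              (HasSubset.Subset.eventuallyLE hsub1)
    have hB : (∫ κ in Ioo δ (1:ℝ), κ * (g κ * Real.exp (-(κ * x ^ 2) / 2))) ≤
        Real.exp (-(δ * x ^ 2) / 2) * ∫ κ in Ioo (0:ℝ) 1, g κ := by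
      calc (∫ κ in Ioo δ (1:ℝ), κ * (g κ * Real.exp (-(κ * x ^ 2) / 2)))
          ≤ ∫ κ in Ioo δ (1:ℝ), Real.exp (-(δ * x ^ 2) / 2) * g κ := by
            apply setIntegral_mono_on ((hintid x).mono_set hsub2)
              ((hint.mono_set hsub2).const_mul _) measurableSet_Ioo
            intro κ hκ
            have hκ01 := hsub2 hκ
            have he : Real.exp (-(κ * x ^ 2) / 2) ≤ Real.exp (-(δ * x ^ 2) / 2) := by
              apply Real.exp_le_exp.2
              have : δ * x ^ 2 ≤ κ * x ^ 2 :=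
                mul_le_mul_of_nonneg_right hκ.1.le (sq_nonneg x)
              linarith
            calc κ * (g κ * Real.exp (-(κ * x ^ 2) / 2))
                ≤ 1 * (g κ * Real.exp (-(δ * x ^ 2) / 2)) := by
                  apply mul_le_mul hκ01.2.le
                    (mul_le_mul_of_nonneg_left he (hpos κ hκ01).le)
                    (mul_nonneg (hpos κ hκ01).le (Real.exp_pos _).le) zero_le_one
              _ = Real.exp (-(δ * x ^ 2) / 2) * g κ := by ring
        _ = Real.exp (-(δ * x ^ 2) / 2) * ∫ κ in Ioo δ (1:ℝ), g κ :=
            integral_const_mul _ _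
        _ ≤ Real.exp (-(δ * x ^ 2) / 2) * ∫ κ in Ioo (0:ℝ) 1, g κ := by
            apply mul_le_mul_of_nonneg_left _ (Real.exp_pos _).le
            exact setIntegral_mono_set hint (hgnn measurableSet_Ioo (fun _ h => h))
              (HasSubset.Subset.eventuallyLE hsub2)
    calc (∫ κ in Ioo (0:ℝ) 1, κ * (g κ * Real.exp (-(κ * x ^ 2) / 2)))
        = (∫ κ in Ioc (0:ℝ) δ, κ * (g κ * Real.exp (-(κ * x ^ 2) / 2))) +
            ∫ κ in Ioo δ (1:ℝ), κ * (g κ * Real.exp (-(κ * x ^ 2) / 2)) := by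
          rw [← hsplit, setIntegral_union hdisj measurableSet_Ioo
            ((hintid x).mono_set hsub1) ((hintid x).mono_set hsub2)]
      _ ≤ _ := add_le_add hA hB
  -- M nonneg
  have hMnn : ∀ x : ℝ,
      0 ≤ ∫ κ in Ioo (0:ℝ) 1, κ * (g κ * Real.exp (-(κ * x ^ 2) / 2)) := by
    intro x
    apply integral_nonneg_of_ae
    filter_upwards [ae_restrict_mem measurableSet_Ioo] with κ hκ
    exact mul_nonneg hκ.1.le (mul_nonneg (hpos κ hκ).le (Real.exp_pos _).le)
  -- reduce to M/D → 0
  set D : ℝ → ℝ := fun x => ∫ κ in Ioo (0:ℝ) 1, g κ * Real.exp (-(κ * x ^ 2) / 2)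
    with hD
  set M : ℝ → ℝ := fun x => ∫ κ in Ioo (0:ℝ) 1, κ * (g κ * Real.exp (-(κ * x ^ 2) / 2))
    with hM
  have hNum : ∀ x : ℝ,
      (∫ κ in Ioo (0:ℝ) 1, (1 - κ) * (g κ * Real.exp (-(κ * x ^ 2) / 2))) =
        D x - M x := by
    intro x
    rw [hD, hM, ← integral_sub (hint1 x) (hintid x)]
    apply setIntegral_congr_fun measurableSet_Ioo
    intro κ _
    ring
  have key : Tendsto (fun x => M x / D x) atTop (𝓝 0) := by
    rw [NormedAddCommGroup.tendsto_nhds_zero]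
    intro ε hε
    set δ : ℝ := min (ε / 2) (1 / 2) with hδdef
    have hδ0 : 0 < δ := lt_min (by linarith) (by norm_num)
    have hδ1 : δ < 1 := lt_of_le_of_lt (min_le_right _ _) (by norm_num)
    have hδε : δ < ε := lt_of_le_of_lt (min_le_left _ _) (by linarith)
    set c : ℝ := ∫ κ in Ioo (0:ℝ) (δ / 2), g κ with hc
    have hc0 : 0 < c := hcpos (δ / 2) (by linarith) (by linarith)
    set C : ℝ := ∫ κ in Ioo (0:ℝ) 1, g κ with hCdef
    have hbound : ∀ x : ℝ, M x / D x ≤ δ + C / c * Real.exp (-(δ * x ^ 2) / 4) := by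
      intro x
      rw [div_le_iff₀ (hDpos x)]
      have h1 : M x ≤ δ * D x + Real.exp (-(δ * x ^ 2) / 2) * C := hMle δ hδ0 hδ1 x
      have h2 : Real.exp (-(δ * x ^ 2) / 2) * C ≤
          (C / c * Real.exp (-(δ * x ^ 2) / 4)) * D x := by
        have hD2 : Real.exp (-(δ / 2 * x ^ 2) / 2) * c ≤ D x :=
          hDge (δ / 2) (by linarith) (by linarith) x
        calc Real.exp (-(δ * x ^ 2) / 2) * C
            = (C / c * Real.exp (-(δ * x ^ 2) / 4)) *
                (Real.exp (-(δ / 2 * x ^ 2) / 2) * c) := by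
              have hee : Real.exp (-(δ * x ^ 2) / 4) * Real.exp (-(δ / 2 * x ^ 2) / 2)
                  = Real.exp (-(δ * x ^ 2) / 2) := by
                rw [← Real.exp_add]; ring_nf
              rw [← hee]
              field_simp
          _ ≤ (C / c * Real.exp (-(δ * x ^ 2) / 4)) * D x := by
              apply mul_le_mul_of_nonneg_left hD2
              positivity
      calc M x ≤ δ * D x + Real.exp (-(δ * x ^ 2) / 2) * C := h1
        _ ≤ δ * D x + (C / c * Real.exp (-(δ * x ^ 2) / 4)) * D x := by linarith
        _ = (δ + C / c * Real.exp (-(δ * x ^ 2) / 4)) * D x := by ring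
    have hlim : Tendsto (fun x : ℝ => δ + C / c * Real.exp (-(δ * x ^ 2) / 4))
        atTop (𝓝 (δ + C / c * 0)) := by
      apply tendsto_const_nhds.add
      apply tendsto_const_nhds.mul
      apply Real.tendsto_exp_atBot.comp
      have h1 : Tendsto (fun x : ℝ => δ / 4 * x ^ 2) atTop atTop :=
        Tendsto.const_mul_atTop (by positivity) (tendsto_pow_atTop two_ne_zero)
      have h2 : Tendsto (fun x : ℝ => -(δ / 4 * x ^ 2)) atTop atBot :=
        tendsto_neg_atBot_iff.2 h1
      convert h2 using 2 with x
      ring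
    have hlt : δ + C / c * 0 < ε := by
      rw [mul_zero, add_zero]; exact hδε
    filter_upwards [hlim.eventually_lt_const hlt] with x hx
    rw [Real.norm_eq_abs, abs_of_nonneg (div_nonneg (hMnn x) (hDpos x).le)]
    exact lt_of_le_of_lt (hbound x) hx
  have heq : (fun x : ℝ =>
      (∫ κ in Ioo (0:ℝ) 1, (1 - κ) * (g κ * Real.exp (-(κ * x ^ 2) / 2))) / D x) =
      fun x => 1 - M x / D x := by
    funext x
    rw [hNum x, sub_div, div_self (hDpos x).ne']
  rw [heq]
  have h1 : Tendsto (fun _ : ℝ => (1:ℝ)) atTop (𝓝 1) := tendsto_const_nhds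
  simpa using h1.sub key

/-- The unnormalized posterior density of the shrinkage coefficient `κ ∈ (0,1)`
given observation `x` and global parameter `τ`. -/
noncomputable def postDens (a : ℝ) (L : ℝ → ℝ) (τ x κ : ℝ) : ℝ :=
  κ ^ (a - 1/2) * (1 - κ) ^ (-a - 1) * L ((1 / τ ^ 2) * (1 / κ - 1)) *
    Real.exp (-(κ * x ^ 2) / 2)

/-- Corollary 4.5: for each fixed `τ > 0`, `E(1-κ | x, τ) → 1` as `x → ∞`. -/
theorem posterior_tail_robustness_mean (a K : ℝ) (ha : 0 < a) (hK : 0 < K)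
    (L : ℝ → ℝ)
    (hLmeas : Measurable L)
    (hLpos : ∀ t > 0, 0 < L t)
    (hnorm : K * ∫ t in Ioi (0:ℝ), t ^ (-a - 1) * L t = 1)
    (τ : ℝ) (hτ : 0 < τ) :
    Tendsto
      (fun x : ℝ =>
        (∫ κ in Ioo (0:ℝ) 1, (1 - κ) * postDens a L τ x κ) /
          (∫ κ in Ioo (0:ℝ) 1, postDens a L τ x κ))
      atTop (𝓝 1) := by
  set g0 : ℝ → ℝ := fun κ =>
    κ ^ (a - 1/2) * (1 - κ) ^ (-a - 1) * L ((1 / τ ^ 2) * (1 / κ - 1)) with hg0def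
  have hrw : ∀ (x κ : ℝ), postDens a L τ x κ = g0 κ * Real.exp (-(κ * x ^ 2) / 2) :=
    fun x κ => rfl
  have hrp : ∀ y : ℝ, Measurable fun x : ℝ => x ^ y := by
    intro y; measurability
  have hmeas : Measurable g0 := by
    apply Measurable.mul
    · exact (hrp (a - 1/2)).mul ((hrp (-a - 1)).comp
        (measurable_const.sub measurable_id))
    · exact hLmeas.comp (measurable_const.mul
        ((measurable_one.div measurable_id).sub measurable_const))
  have hpos : ∀ κ ∈ Ioo (0:ℝ) 1, 0 < g0 κ := by
    intro κ hκ
    have h1 : 0 < κ ^ (a - 1/2) := Real.rpow_pos_of_pos hκ.1 _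
    have h2 : 0 < (1 - κ) ^ (-a - 1) := Real.rpow_pos_of_pos (by linarith [hκ.2]) _
    have harg : 0 < (1 / τ ^ 2) * (1 / κ - 1) := by
      have hd : 1 < 1 / κ := by
        rw [lt_div_iff₀ hκ.1]; linarith [hκ.2]
      have hq : (0:ℝ) < 1 / τ ^ 2 := by positivity
      exact mul_pos hq (by linarith)
    exact mul_pos (mul_pos h1 h2) (hLpos _ harg)
  have hint : IntegrableOn g0 (Ioo 0 1) :=
    g0_integrable a K ha hK L hLmeas hLpos hnorm τ hτ
  simp only [hrw]
  exact ratio_aux g0 hmeas hpos hint
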